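/- Let (K, D) be a differential field of characteristic zero, let t be transcendental over K, and extend D to the polynomial ring K[t] by D(t) = w for some w ∈ K (t is a primitive monomial). If there is no u ∈ K with D(u) = w, then no nonconstant polynomial p ∈ K[t] divides Dp; equivalently, every nonconstant polynomial in K[t] has no nonconstant special factor and every squarefree polynomial in K[t] is normal. -/

import Mathlib

open Polynomial

theorem primitive_case_no_special
    {K : Type} [Field K] [CharZero K]
    (d : K → K)
    (hdadd : ∀ a b : K, d (a + b) = d a + d b)
    (hdmul : ∀ a b : K, d (a * b) = a * d b + b * d a)
    (D : Polynomial K → Polynomial K)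
    (hDadd : ∀ p q : Polynomial K, D (p + q) = D p + D q)
    (hDmul : ∀ p q : Polynomial K, D (p * q) = p * D q + q * D p)
    (hDC : ∀ c : K, D (C c) = C (d c))
    (w : K) (hDX : D X = C w)
    (hnow : ¬ ∃ u : K, d u = w) :
    (∀ p : Polynomial K, 0 < p.degree → ¬ p ∣ D p) ∧
    (∀ p : Polynomial K, 0 < p.degree →
      ∀ q : Polynomial K, 0 < q.degree → q ∣ p → ¬ q ∣ D q) ∧
    (∀ p : Polynomial K, Squarefree p → IsCoprime p (D p)) := by
  classical
  have hd0 : d 0 = 0 := by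
    have h := hdadd 0 0
    rw [add_zero] at h
    exact (right_eq_add.mp h)
  have hd1 : d 1 = 0 := by
    have h := hdmul 1 1
    simp only [one_mul, mul_one] at h
    exact (right_eq_add.mp h)
  have hdneg : ∀ a : K, d (-a) = - d a := by
    intro a
    have h := hdadd a (-a)
    rw [add_neg_cancel, hd0] at h
    exact eq_neg_of_add_eq_zero_right h.symm
  have hdnsmul : ∀ (m : ℕ) (a : K), d (m • a) = m • d a := by
    intro m a
    induction m with
    | zero => simpa using hd0
    | succ m ih => rw [succ_nsmul, succ_nsmul, hdadd, ih]
  have hD1 : D 1 = 0 := by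
    have h := hDmul 1 1
    simp only [one_mul, mul_one] at h
    exact (right_eq_add.mp h)
  have hDXpow : ∀ n : ℕ, D (X ^ n) = C w * derivative (X ^ n : Polynomial K) := by
    intro n
    induction n with
    | zero => simpa using hD1
    | succ n ih =>
      rw [pow_succ, hDmul, hDX, ih, derivative_mul, derivative_X]
      ring
  have key : ∀ p : Polynomial K,
      D p = (p.sum fun n a => C (d a) * X ^ n) + C w * derivative p := by
    intro p
    induction p using Polynomial.induction_on' with
    | add p q hp hq =>
      rw [hDadd, hp, hq, derivative_add,
        Polynomial.sum_add_index p q _ (fun i => by simp [hd0])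
          (fun i a b => by rw [hdadd]; rw [C_add]; ring)]
      ring
    | monomial n a =>
      rw [Polynomial.sum_monomial_index a _ (by simp [hd0]),
        ← Polynomial.C_mul_X_pow_eq_monomial, hDmul, hDC, hDXpow,
        Polynomial.derivative_C_mul]
      ring
  have hcoeff : ∀ (p : Polynomial K) (k : ℕ),
      (D p).coeff k = d (p.coeff k) + w * ((k + 1 : K) * p.coeff (k + 1)) := by
    intro p k
    rw [key, coeff_add, coeff_C_mul, coeff_derivative]
    have hs : (p.sum fun n a => C (d a) * X ^ n).coeff k = d (p.coeff k) := by
      rw [Polynomial.sum_def, Polynomial.finset_sum_coeff]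
      simp only [coeff_C_mul, coeff_X_pow, mul_ite, mul_one, mul_zero]
      rw [Finset.sum_ite_eq p.support k fun i => d (p.coeff i)]
      by_cases h : k ∈ p.support
      · simp [h]
      · simp [h, Polynomial.notMem_support_iff.mp h, hd0]
    rw [hs]
    ring
  -- core: monic case
  have core : ∀ p : Polynomial K, p.Monic → 0 < p.degree → ¬ p ∣ D p := by
    intro p hm hp hdvd
    have hn : 0 < p.natDegree := natDegree_pos_iff_degree_pos.mpr hp
    set n := p.natDegree with hn'
    have hpdeg : p.degree = (n : ℕ) := Polynomial.degree_eq_natDegree hm.ne_zero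
    have hdeglt : (D p).degree < p.degree := by
      rw [hpdeg, Polynomial.degree_lt_iff_coeff_zero]
      intro m hm'
      rw [hcoeff]
      have h1 : p.coeff (m + 1) = 0 :=
        Polynomial.coeff_eq_zero_of_natDegree_lt (by omega)
      rcases eq_or_lt_of_le hm' with he | hlt
      · rw [← he] at h1
        rw [← he, h1, hm.coeff_natDegree, hd1]
        ring
      · have h2 : p.coeff m = 0 := Polynomial.coeff_eq_zero_of_natDegree_lt hlt
        rw [h1, h2, hd0]
        ring
    have hDp0 : D p = 0 := Polynomial.eq_zero_of_dvd_of_degree_lt hdvd hdeglt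
    have hc : (0 : K) = d (p.coeff (n - 1))
        + w * ((((n - 1 : ℕ) : K) + 1) * p.coeff (n - 1 + 1)) := by
      have h := hcoeff p (n - 1)
      rw [hDp0] at h
      simpa using h
    have hnn : n - 1 + 1 = n := Nat.succ_pred_eq_of_pos hn
    have hcast : (((n - 1 : ℕ) : K) + 1) = (n : K) := by
      exact_mod_cast congrArg (Nat.cast : ℕ → K) hnn
    rw [hnn, hcast, hm.coeff_natDegree, mul_one] at hc
    set a := p.coeff (n - 1) with ha
    have hnK : (n : K) ≠ 0 := Nat.cast_ne_zero.mpr hn.ne'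
    have hda : d a = -((n : K) * w) := by
      have := hc.symm
      linear_combination this
    have hdiv : d (a / (n : K)) = -w := by
      have h1 : a = (n : ℕ) • (a / (n : K)) := by
        rw [nsmul_eq_mul]
        field_simp
      have h2 := hdnsmul n (a / (n : K))
      rw [← h1, nsmul_eq_mul] at h2
      rw [hda] at h2
      have h3 : (n : K) * d (a / (n : K)) = (n : K) * (-w) := by
        rw [← h2]; ring
      exact mul_left_cancel₀ hnK h3
    exact hnow ⟨-(a / (n : K)), by rw [hdneg, hdiv, neg_neg]⟩
  -- general case
  have main : ∀ p : Polynomial K, 0 < p.degree → ¬ p ∣ D p := by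
    intro p hp hdvd
    have hp0 : p ≠ 0 := fun h => by simp [h] at hp
    set c := p.leadingCoeff with hcdef
    have hc0 : c ≠ 0 := Polynomial.leadingCoeff_ne_zero.mpr hp0
    set q := p * C c⁻¹ with hq
    have hqm : q.Monic := Polynomial.monic_mul_leadingCoeff_inv hp0
    have hqdeg : 0 < q.degree := by
      rw [hq, Polynomial.degree_mul_leadingCoeff_inv p hp0]
      exact hp
    have hpq : p = q * C c := by
      rw [hq, mul_assoc, ← C_mul, inv_mul_cancel₀ hc0, C_1, mul_one]
    have hqp : q ∣ p := Dvd.intro _ hpq.symm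
    apply core q hqm hqdeg
    rw [hq, hDmul]
    exact dvd_add (hqp.mul_right _) ((hqp.trans hdvd).mul_left _)
  refine ⟨main, fun p _ q hq _ => main q hq, ?_⟩
  intro p hsf
  by_contra hnc
  have hp0 : p ≠ 0 := by rintro rfl; exact not_squarefree_zero hsf
  have hg : ¬ IsUnit (EuclideanDomain.gcd p (D p)) :=
    fun h => hnc (EuclideanDomain.gcd_isUnit_iff.mp h)
  have hg0 : EuclideanDomain.gcd p (D p) ≠ 0 :=
    fun h => hp0 (EuclideanDomain.gcd_eq_zero_iff.mp h).1
  obtain ⟨r, hr, hrg⟩ := WfDvdMonoid.exists_irreducible_factor hg hg0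
  have hrp : r ∣ p := hrg.trans (EuclideanDomain.gcd_dvd_left _ _)
  have hrD : r ∣ D p := hrg.trans (EuclideanDomain.gcd_dvd_right _ _)
  obtain ⟨s, rfl⟩ := hrp
  have hrd : 0 < r.degree := Polynomial.degree_pos_of_irreducible hr
  rw [hDmul] at hrD
  have hrs : r ∣ s * D r := (dvd_add_right (dvd_mul_right r (D s))).mp hrD
  rcases hr.prime.2.2 s (D r) hrs with h | h
  · exact hr.not_isUnit (hsf r (mul_dvd_mul_left r h))
  · exact main r hrd h
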